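/- Uniqueness of the associated polynomial (Proposition 2.2): Suppose Γ ≤ GL₂(A) contains Γ(𝔫) for some nonzero ideal 𝔫 ⊆ A, and let f : Ω → L be a nonzero function. Suppose f is quasi-modular of weight k, type m and depth ≤ ℓ for Γ with coefficient family (f₀,…,f_ℓ) where f_ℓ ≠ 0, and also quasi-modular of weight k', type m' and depth ≤ ℓ' for Γ with coefficient family (g₀,…,g_{ℓ'}) where g_{ℓ'} ≠ 0, and assume that every f_i and every g_j is periodic with respect to some nonzero ideal of A (i.e. for each such function h there is a nonzero ideal I ⊆ A with h(z+a) = h(z) for all a ∈ I and z ∈ Ω). Then k = k', ℓ = ℓ', f_i = g_i for all 0 ≤ i ≤ ℓ, and m ≡ m' modulo the order of the subgroup det Γ ≤ 𝔽_q^×. -/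

import Mathlib

noncomputable section

namespace DrinfeldQM

variable {L : Type*} [Field L]

/-- Entry `(i,j)` of `γ ∈ GL₂(F)`, viewed inside `L`. -/
def Mc (F : Subfield L) (γ : GL (Fin 2) F) (i j : Fin 2) : L :=
  ((γ : Matrix (Fin 2) (Fin 2) F) i j : L)

/-- Determinant of `γ ∈ GL₂(F)`, viewed inside `L`. -/
def detL (F : Subfield L) (γ : GL (Fin 2) F) : L :=
  ((γ : Matrix (Fin 2) (Fin 2) F).det : L)

/-- Automorphy factor `cz + d`. -/
def jf (F : Subfield L) (γ : GL (Fin 2) F) (z : L) : L :=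
  Mc F γ 1 0 * z + Mc F γ 1 1

/-- Fractional linear action of `GL₂(F)` on `L` (restricting to `Ω`). -/
def act (F : Subfield L) (γ : GL (Fin 2) F) (z : L) : L :=
  (Mc F γ 0 0 * z + Mc F γ 0 1) / jf F γ z

/-- The Drinfeld upper half plane `Ω = L ∖ F`. -/
def Omega (F : Subfield L) : Set L := {z | z ∉ F}

/-- The slash operator `f |_{k,m} γ` of weight `k` and type `m`. -/
def slash (F : Subfield L) (k m : ℤ) (f : L → L) (γ : GL (Fin 2) F) : L → L :=
  fun z => detL F γ ^ m * jf F γ z ^ (-k) * f (act F γ z)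

/-- `f` is quasi-modular of weight `k`, type `m` and depth `≤ ℓ` for the set `S ⊆ GL₂(F)`
with coefficient family `fam` (only the indices `0,…,ℓ` of `fam` are relevant). -/
def IsQM (F : Subfield L) (S : Set (GL (Fin 2) F)) (k m : ℤ) (ℓ : ℕ)
    (f : L → L) (fam : ℕ → L → L) : Prop :=
  Set.EqOn (fam 0) f (Omega F) ∧
    ∀ γ ∈ S, ∀ z ∈ Omega F,
      slash F k m f γ z =
        ∑ i ∈ Finset.range (ℓ + 1), fam i z * (Mc F γ 1 0 / jf F γ z) ^ i

/-- The coefficient family of the `i`-th coefficient `f_i` of a quasi-modular function with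
coefficient family `fam`:  `(f_i)_h = ((h+i) choose i) · f_{h+i}`. -/
def shiftFam (i : ℕ) (fam : ℕ → L → L) : ℕ → L → L :=
  fun h z => ((h + i).choose i : L) * fam (h + i) z

/-- The double-slash operator `f ∥_{k,m} γ` of a quasi-modular function of depth `≤ ℓ` with
coefficient family `fam`. -/
def dslash (F : Subfield L) (k m : ℤ) (ℓ : ℕ) (fam : ℕ → L → L)
    (γ : GL (Fin 2) F) : L → L :=
  fun z => ∑ i ∈ Finset.range (ℓ + 1),
    (-(Mc F γ 1 0) / jf F γ z) ^ i * detL F γ ^ (m - (i : ℤ)) *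
      jf F γ z ^ (2 * (i : ℤ) - k) * fam i (act F γ z)

/-- The double-slash operator on polynomial-valued functions `P : Ω → L[X]`:
`(P ∥_{k,m} γ)(z, X) = (det γ)^m (cz+d)^{-k} P(γ·z, ((cz+d)²/det γ)(X - c/(cz+d)))`. -/
def pdslash (F : Subfield L) (k m : ℤ) (P : L → Polynomial L)
    (γ : GL (Fin 2) F) : L → Polynomial L :=
  fun z =>
    Polynomial.C (detL F γ ^ m * jf F γ z ^ (-k)) *
      (P (act F γ z)).comp
        (Polynomial.C (jf F γ z ^ 2 / detL F γ) *
          (Polynomial.X - Polynomial.C (Mc F γ 1 0 / jf F γ z)))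

/-- The associated polynomial `P_f(z, X) = ∑_{i=0}^{ℓ} f_i(z) Xⁱ`. -/
def assocPoly (ℓ : ℕ) (fam : ℕ → L → L) : L → Polynomial L :=
  fun z => ∑ i ∈ Finset.range (ℓ + 1), Polynomial.C (fam i z) * Polynomial.X ^ i

/-- `E` satisfies the functional equation of the false Eisenstein series (weight 2, type 1,
depth 1, coefficient family `(E, -π⁻¹)`) for all `γ ∈ S`. -/
def EFunEq (F : Subfield L) (S : Set (GL (Fin 2) F)) (π : L) (E : L → L) : Prop :=
  ∀ γ ∈ S, ∀ z ∈ Omega F,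
    E (act F γ z) =
      (detL F γ)⁻¹ * jf F γ z ^ 2 * (E z - Mc F γ 1 0 / (π * jf F γ z))

variable {Fq : Type*} [Field Fq] [Fintype Fq]

/-- The image in `L` of a polynomial `r ∈ A = Fq[T]` under `A → F ⊆ L`. -/
def iL (F : Subfield L) (ι : Polynomial Fq →+* F) (r : Polynomial Fq) : L := (ι r : L)

/-- `γ ∈ GL₂(F)` lies in `Γ₀(𝔞) ⊆ GL₂(A)`: its entries come from a matrix `M` over
`A = Fq[T]` with unit determinant whose lower-left entry lies in `𝔞`.
Taking `𝔞 = ⊤` expresses membership in `GL₂(A)`. -/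
def InGamma0 (F : Subfield L) (ι : Polynomial Fq →+* F)
    (𝔞 : Ideal (Polynomial Fq)) (γ : GL (Fin 2) F) : Prop :=
  ∃ M : Matrix (Fin 2) (Fin 2) (Polynomial Fq),
    (∀ i j, iL F ι (M i j) = Mc F γ i j) ∧ IsUnit M.det ∧ M 1 0 ∈ 𝔞

/-- `γ ∈ GL₂(F)` lies in the principal congruence subgroup `Γ(𝔫) ⊆ GL₂(A)`. -/
def InGammaN (F : Subfield L) (ι : Polynomial Fq →+* F)
    (𝔫 : Ideal (Polynomial Fq)) (γ : GL (Fin 2) F) : Prop :=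
  ∃ M : Matrix (Fin 2) (Fin 2) (Polynomial Fq),
    (∀ i j, iL F ι (M i j) = Mc F γ i j) ∧ IsUnit M.det ∧
      ∀ i j, M i j - (1 : Matrix (Fin 2) (Fin 2) (Polynomial Fq)) i j ∈ 𝔫

/-- `g` is modular of weight `w` and type `t` for `Γ₀(𝔞)`. -/
def IsModularOn (F : Subfield L) (ι : Polynomial Fq →+* F)
    (𝔞 : Ideal (Polynomial Fq)) (w t : ℤ) (g : L → L) : Prop :=
  ∀ γ : GL (Fin 2) F, InGamma0 F ι 𝔞 γ → ∀ z ∈ Omega F, slash F w t g γ z = g z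

/-- The degeneracy map `(δ_𝔭 g)(z) = g(℘ z)`. -/
def deltaP (F : Subfield L) (ι : Polynomial Fq →+* F) (℘ : Polynomial Fq)
    (g : L → L) : L → L := fun z => g (iL F ι ℘ * z)

/-- The Atkin–Lehner operator `(U_𝔭 g)(z) = ∑_{Q ∈ A, deg Q < deg ℘} g((z+Q)/℘)`,
where `Q = ∑ᵢ cᵢ Tⁱ` ranges over polynomials of degree `< deg ℘`. -/
def UP (F : Subfield L) (ι : Polynomial Fq →+* F) (℘ : Polynomial Fq)
    (g : L → L) : L → L :=
  fun z => ∑ c : Fin ℘.natDegree → Fq,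
    g ((z + iL F ι (∑ i : Fin ℘.natDegree, Polynomial.C (c i) * Polynomial.X ^ (i : ℕ))) /
      iL F ι ℘)

/-- The `𝔭`-stabilization `E_𝔭 = E - ℘·δ_𝔭E`. -/
def Ep (F : Subfield L) (ι : Polynomial Fq →+* F) (℘ : Polynomial Fq)
    (E : L → L) : L → L := fun z => E z - iL F ι ℘ * deltaP F ι ℘ E z

section AuxLemmas

variable (F : Subfield L)

lemma detF_ne_zero (γ : GL (Fin 2) F) : ((γ : Matrix (Fin 2) (Fin 2) F).det : F) ≠ 0 :=
  ((Matrix.isUnit_iff_isUnit_det _).mp γ.isUnit).ne_zero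

lemma detL_ne_zero (γ : GL (Fin 2) F) : detL F γ ≠ 0 := by
  simp only [detL, ne_eq, ZeroMemClass.coe_eq_zero]
  exact detF_ne_zero F γ

lemma detL_eq (γ : GL (Fin 2) F) :
    detL F γ = Mc F γ 0 0 * Mc F γ 1 1 - Mc F γ 0 1 * Mc F γ 1 0 := by
  rw [detL, Matrix.det_fin_two]
  push_cast
  rfl

lemma omega_ne_zero {z : L} (hz : z ∈ Omega F) : z ≠ 0 := fun h => hz (h ▸ F.zero_mem)

lemma omega_add (x : F) {z : L} (hz : z ∈ Omega F) : z + (x : L) ∈ Omega F := by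
  intro h
  exact hz (by simpa using F.sub_mem h x.2)

lemma jf_ne_zero (γ : GL (Fin 2) F) {z : L} (hz : z ∈ Omega F) : jf F γ z ≠ 0 := by
  intro h
  simp only [jf, Mc] at h
  by_cases hc : (((γ : Matrix (Fin 2) (Fin 2) F) 1 0 : F) : L) = 0
  · have hd : (((γ : Matrix (Fin 2) (Fin 2) F) 1 1 : F) : L) = 0 := by
      rw [hc, zero_mul, zero_add] at h
      exact h
    apply detL_ne_zero F γ
    rw [detL_eq]
    simp only [Mc, hc, hd, mul_zero, zero_mul, sub_zero]
  · apply hz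
    have hzval : z = ((-(γ : Matrix (Fin 2) (Fin 2) F) 1 1 / (γ : Matrix (Fin 2) (Fin 2) F) 1 0 : F) : L) := by
      push_cast
      rw [eq_div_iff hc]
      linear_combination h
    rw [hzval]
    exact SetLike.coe_mem _

lemma act_mem (γ : GL (Fin 2) F) {z : L} (hz : z ∈ Omega F) : act F γ z ∈ Omega F := by
  intro hF
  set t : F := ⟨act F γ z, hF⟩ with ht
  have hjf := jf_ne_zero F γ hz
  have h1 : Mc F γ 0 0 * z + Mc F γ 0 1 = (t : L) * (Mc F γ 1 0 * z + Mc F γ 1 1) := by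
    have h2 : act F γ z = (t : L) := rfl
    rw [← h2, act, jf]
    rw [jf] at hjf; exact (div_mul_cancel₀ _ hjf).symm
  by_cases hca : Mc F γ 0 0 - (t : L) * Mc F γ 1 0 = 0
  · apply detL_ne_zero F γ
    have hb : Mc F γ 0 1 = (t : L) * Mc F γ 1 1 := by linear_combination h1 - z * hca
    have ha : Mc F γ 0 0 = (t : L) * Mc F γ 1 0 := by linear_combination hca
    rw [detL_eq, ha, hb]
    ring
  · apply hz
    have hzv : z = (((t * (γ : Matrix (Fin 2) (Fin 2) F) 1 1 - (γ : Matrix (Fin 2) (Fin 2) F) 0 1) /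
        ((γ : Matrix (Fin 2) (Fin 2) F) 0 0 - t * (γ : Matrix (Fin 2) (Fin 2) F) 1 0) : F) : L) := by
      push_cast
      rw [eq_div_iff (by simpa [Mc] using hca)]
      have := h1
      simp only [Mc] at this
      linear_combination this
    rw [hzv]
    exact SetLike.coe_mem _

lemma mc_mul (γ δ : GL (Fin 2) F) (i j : Fin 2) :
    Mc F (γ * δ) i j = Mc F γ i 0 * Mc F δ 0 j + Mc F γ i 1 * Mc F δ 1 j := by
  show ((((γ * δ : GL (Fin 2) F) : Matrix (Fin 2) (Fin 2) F)) i j : L) = _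
  rw [Units.val_mul, Matrix.mul_apply, Fin.sum_univ_two]
  push_cast
  rfl

lemma jf_mul (γ δ : GL (Fin 2) F) {z : L} (hz : z ∈ Omega F) :
    jf F (γ * δ) z = jf F γ (act F δ z) * jf F δ z := by
  have h := jf_ne_zero F δ hz
  simp only [jf, act, mc_mul]
  simp only [jf] at h
  field_simp
  ring

lemma act_mul (γ δ : GL (Fin 2) F) {z : L} (hz : z ∈ Omega F) :
    act F (γ * δ) z = act F γ (act F δ z) := by
  have hδ := jf_ne_zero F δ hz
  have hγ := jf_ne_zero F γ (act_mem F δ hz)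
  have hγδ := jf_ne_zero F (γ * δ) hz
  have hjm := jf_mul F γ δ hz
  simp only [act, jf, mc_mul] at hγ hγδ hjm ⊢
  rw [div_eq_div_iff hγδ hγ, hjm]
  simp only [jf] at hδ
  field_simp
  ring

lemma act_one (z : L) : act F 1 z = z := by
  simp [act, jf, Mc, Units.val_one, Matrix.one_apply]

lemma act_inv_cancel (γ : GL (Fin 2) F) {z : L} (hz : z ∈ Omega F) :
    act F γ (act F γ⁻¹ z) = z := by
  rw [← act_mul F γ γ⁻¹ hz, mul_inv_cancel, act_one]

/-- The lower-triangular unipotent matrix `(1, 0; x, 1)` as an element of `GL₂(F)`. -/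
def ltu (x : F) : GL (Fin 2) F :=
  Matrix.GeneralLinearGroup.mkOfDetNeZero !![1, 0; x, 1] (by
    rw [Matrix.det_fin_two_of]; simp)

lemma ltu_val (x : F) : ((ltu F x : GL (Fin 2) F) : Matrix (Fin 2) (Fin 2) F) = !![1, 0; x, 1] :=
  rfl

lemma mc_ltu_00 (x : F) : Mc F (ltu F x) 0 0 = 1 := by
  simp [Mc, ltu_val]

lemma mc_ltu_01 (x : F) : Mc F (ltu F x) 0 1 = 0 := by
  simp [Mc, ltu_val]

lemma mc_ltu_10 (x : F) : Mc F (ltu F x) 1 0 = (x : L) := by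
  simp [Mc, ltu_val]

lemma mc_ltu_11 (x : F) : Mc F (ltu F x) 1 1 = 1 := by
  simp [Mc, ltu_val]

lemma detL_ltu (x : F) : detL F (ltu F x) = 1 := by
  rw [detL_eq, mc_ltu_00, mc_ltu_01, mc_ltu_10, mc_ltu_11]
  ring

lemma jf_ltu (x : F) (z : L) : jf F (ltu F x) z = (x : L) * z + 1 := by
  rw [jf, mc_ltu_10, mc_ltu_11]

lemma act_ltu (x : F) (z : L) : act F (ltu F x) z = z / ((x : L) * z + 1) := by
  rw [act, jf, mc_ltu_00, mc_ltu_01, mc_ltu_10, mc_ltu_11, one_mul, add_zero]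

lemma poly_eq_of_eval_eq {S : Set L} (hS : S.Infinite) {p q : Polynomial L}
    (h : ∀ c ∈ S, p.eval c = q.eval c) : p = q := by
  have h0 : p - q = 0 := by
    apply Polynomial.eq_zero_of_infinite_isRoot
    apply hS.mono
    intro c hc
    simp [Polynomial.IsRoot, h c hc]
  exact sub_eq_zero.mp h0

lemma eval_top (ℓ1 : ℕ) (G : ℕ → L) {z : L} (hz : z ≠ 0) :
    Polynomial.eval (-z⁻¹) (∑ i ∈ Finset.range (ℓ1 + 1), Polynomial.C (G i) *
        (Polynomial.X ^ i * (Polynomial.X * Polynomial.C z + 1) ^ (ℓ1 - i))) =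
      G ℓ1 * (-z⁻¹) ^ ℓ1 := by
  have h0 : -z⁻¹ * z + 1 = 0 := by field_simp; norm_num
  rw [Polynomial.eval_finset_sum, Finset.sum_eq_single ℓ1]
  · simp
  · intro i hi hne
    have hi' : i ≤ ℓ1 := Nat.lt_succ_iff.mp (Finset.mem_range.mp hi)
    have he : Polynomial.eval (-z⁻¹) (Polynomial.X * Polynomial.C z + 1) = 0 := by
      simp only [Polynomial.eval_add, Polynomial.eval_mul, Polynomial.eval_X,
        Polynomial.eval_C, Polynomial.eval_one]
      exact h0
    rw [Polynomial.eval_mul, Polynomial.eval_mul, Polynomial.eval_pow, Polynomial.eval_pow, he,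
      zero_pow (by omega : ℓ1 - i ≠ 0), mul_zero, mul_zero]
  · intro h
    exact absurd (Finset.self_mem_range_succ ℓ1) h

lemma periodic_contra {Fq : Type*} [Field Fq] [Fintype Fq] (ι : Polynomial Fq →+* F)
    (hι : Function.Injective ι)
    (d : ℕ) (hd : 0 < d) (A B : L → L)
    (I I' : Ideal (Polynomial Fq)) (hI : I ≠ ⊥) (hI' : I' ≠ ⊥)
    (hA : ∀ a ∈ I, ∀ z ∈ Omega F, A (z + iL F ι a) = A z)
    (hB : ∀ a ∈ I', ∀ z ∈ Omega F, B (z + iL F ι a) = B z)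
    (hrel : ∀ z ∈ Omega F, A z = B z * (-z) ^ d)
    (z0 : L) (hz0 : z0 ∈ Omega F) (hB0 : B z0 ≠ 0) : False := by
  obtain ⟨b, hbI, hb0⟩ := Submodule.exists_mem_ne_zero_of_ne_bot hI
  obtain ⟨b', hbI', hb0'⟩ := Submodule.exists_mem_ne_zero_of_ne_bot hI'
  have hiLinj : Function.Injective (iL F ι) := fun a c h => hι (Subtype.coe_injective h)
  have hroot : ∀ r : Polynomial Fq, (iL F ι (b * b' * r) + z0) ^ d = z0 ^ d := by
    intro r
    have h1 : b * b' * r ∈ I := by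
      rw [mul_assoc]; exact Ideal.mul_mem_right _ _ hbI
    have h2 : b * b' * r ∈ I' := by
      rw [show b * b' * r = b' * (b * r) by ring]; exact Ideal.mul_mem_right _ _ hbI'
    have hsΩ : z0 + iL F ι (b * b' * r) ∈ Omega F := omega_add F (ι (b * b' * r)) hz0
    have e3 := hrel _ hsΩ
    rw [hA _ h1 z0 hz0, hB _ h2 z0 hz0, hrel _ hz0] at e3
    have e5 : (-(z0 + iL F ι (b * b' * r))) ^ d = (-z0) ^ d :=
      (mul_left_cancel₀ hB0 e3).symm
    have e6 : (z0 + iL F ι (b * b' * r)) ^ d = z0 ^ d := by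
      have h7 : ((-1 : L)) ^ d * (-(z0 + iL F ι (b * b' * r))) ^ d
          = ((-1 : L)) ^ d * (-z0) ^ d := by rw [e5]
      rw [← mul_pow, ← mul_pow] at h7
      simpa using h7
    rw [add_comm] at e6
    exact e6
  have hinj2 : Function.Injective (fun r : Polynomial Fq => iL F ι (b * b' * r)) := by
    intro r s h
    exact mul_left_cancel₀ (mul_ne_zero hb0 hb0') (hiLinj h)
  have hinf : (Set.range (fun r : Polynomial Fq => iL F ι (b * b' * r))).Infinite :=
    Set.infinite_range_of_injective hinj2
  have hzero : ((Polynomial.X + Polynomial.C z0) ^ d - Polynomial.C (z0 ^ d) : Polynomial L) = 0 := by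
    apply Polynomial.eq_zero_of_infinite_isRoot
    apply hinf.mono
    rintro s ⟨r, rfl⟩
    simp only [Set.mem_setOf_eq, Polynomial.IsRoot, Polynomial.eval_sub, Polynomial.eval_pow,
      Polynomial.eval_add, Polynomial.eval_C, Polynomial.eval_X]
    rw [sub_eq_zero]
    exact hroot r
  have hmon : (((Polynomial.X + Polynomial.C z0 : Polynomial L)) ^ d).coeff d = 1 := by
    have hm : ((Polynomial.X + Polynomial.C z0 : Polynomial L) ^ d).Monic :=
      (Polynomial.monic_X_add_C z0).pow d
    have hdeg : ((Polynomial.X + Polynomial.C z0 : Polynomial L) ^ d).natDegree = d := by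
      simp [Polynomial.natDegree_pow, Polynomial.natDegree_X_add_C]
    simpa [hdeg] using hm.coeff_natDegree
  have hcd := congrArg (fun p => Polynomial.coeff p d) hzero
  simp only [Polynomial.coeff_sub, Polynomial.coeff_zero, hmon, Polynomial.coeff_C,
    if_neg hd.ne'] at hcd
  norm_num at hcd

end AuxLemmas

/-- Uniqueness of the associated polynomial (Proposition 2.2). -/
theorem associated_polynomial_unique
    {L : Type*} [Field L] {Fq : Type*} [Field Fq] [Fintype Fq]
    (F : Subfield L) (ι : Polynomial Fq →+* F) (hι : Function.Injective ι)
    (Γ : Subgroup (GL (Fin 2) F))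
    (hΓA : ∀ γ ∈ Γ, InGamma0 F ι ⊤ γ)
    (𝔫 : Ideal (Polynomial Fq)) (h𝔫 : 𝔫 ≠ ⊥)
    (hΓ𝔫 : ∀ γ : GL (Fin 2) F, InGammaN F ι 𝔫 γ → γ ∈ Γ)
    (k k' m m' : ℤ) (ℓ ℓ' : ℕ) (f : L → L)
    (hf : ∃ z ∈ Omega F, f z ≠ 0)
    (fam gam : ℕ → L → L)
    (hQM : IsQM F (Γ : Set (GL (Fin 2) F)) k m ℓ f fam)
    (hQM' : IsQM F (Γ : Set (GL (Fin 2) F)) k' m' ℓ' f gam)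
    (hfl : ∃ z ∈ Omega F, fam ℓ z ≠ 0)
    (hgl : ∃ z ∈ Omega F, gam ℓ' z ≠ 0)
    (hper : ∀ i ≤ ℓ, ∃ I : Ideal (Polynomial Fq), I ≠ ⊥ ∧
      ∀ a ∈ I, ∀ z ∈ Omega F, fam i (z + iL F ι a) = fam i z)
    (hper' : ∀ i ≤ ℓ', ∃ I : Ideal (Polynomial Fq), I ≠ ⊥ ∧
      ∀ a ∈ I, ∀ z ∈ Omega F, gam i (z + iL F ι a) = gam i z) :
    k = k' ∧ ℓ = ℓ' ∧ (∀ i ≤ ℓ, Set.EqOn (fam i) (gam i) (Omega F)) ∧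
      ((Set.ncard (detL F '' (Γ : Set (GL (Fin 2) F))) : ℤ) ∣ (m - m')) := by
  classical
  -- Setup: an infinite set of "translation parameters" in L coming from 𝔫
  obtain ⟨b0, hb0I, hb00⟩ := Submodule.exists_mem_ne_zero_of_ne_bot h𝔫
  have hiLinj : Function.Injective (iL F ι) := fun a c h => hι (Subtype.coe_injective h)
  set S : Set L := Set.range (fun r : Polynomial Fq => iL F ι (b0 * r)) with hSdef
  have hSinf : S.Infinite := Set.infinite_range_of_injective (fun r s h =>
    mul_left_cancel₀ hb00 (hiLinj h))
  have hSmem : ∀ c ∈ S, ∃ a ∈ 𝔫, iL F ι a = c := by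
    rintro c ⟨r, rfl⟩
    exact ⟨b0 * r, Ideal.mul_mem_right _ _ hb0I, rfl⟩
  have hSF : ∀ c ∈ S, ∃ x : F, (x : L) = c := by
    rintro c ⟨r, rfl⟩
    exact ⟨ι (b0 * r), rfl⟩
  have hune : ∀ z ∈ Omega F, ∀ c ∈ S, c * z + 1 ≠ 0 := by
    intro z hz c hc
    obtain ⟨x, rfl⟩ := hSF c hc
    have h := jf_ne_zero F (ltu F x) hz
    rwa [jf_ltu] at h
  -- Γ contains the lower-triangular unipotent elements with parameter in 𝔫
  have hmemΓ : ∀ a ∈ 𝔫, ltu F (ι a) ∈ Γ := by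
    intro a ha
    apply hΓ𝔫
    refine ⟨!![1, 0; a, 1], ?_, ?_, ?_⟩
    · intro i j
      fin_cases i <;> fin_cases j <;>
        simp [iL, Mc, ltu_val, map_one, map_zero]
    · rw [Matrix.det_fin_two_of]
      simp
    · intro i j
      fin_cases i <;> fin_cases j <;>
        simp [Matrix.one_apply, ha, sub_self, Submodule.zero_mem]
  -- the key identity obtained from these unipotent elements
  have hkey : ∀ (k1 m1 : ℤ) (ℓ1 : ℕ) (F1 : ℕ → L → L),
      IsQM F (Γ : Set (GL (Fin 2) F)) k1 m1 ℓ1 f F1 →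
      ∀ z ∈ Omega F, ∀ c ∈ S,
        (c * z + 1) ^ (-k1) * f (z / (c * z + 1)) =
          ∑ i ∈ Finset.range (ℓ1 + 1), F1 i z * (c / (c * z + 1)) ^ i := by
    intro k1 m1 ℓ1 F1 hQ z hz c hc
    obtain ⟨a, haI, rfl⟩ := hSmem c hc
    have h := hQ.2 (ltu F (ι a)) (hmemΓ a haI) z hz
    simp only [slash, detL_ltu, one_zpow, one_mul, jf_ltu, act_ltu, mc_ltu_10] at h
    exact h
  -- evaluation of the associated polynomial at points of S
  have heval : ∀ (ℓ1 : ℕ) (k1 : ℤ) (F1 : ℕ → L → L),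
      (∀ z ∈ Omega F, ∀ c ∈ S, (c * z + 1) ^ (-k1) * f (z / (c * z + 1)) =
        ∑ i ∈ Finset.range (ℓ1 + 1), F1 i z * (c / (c * z + 1)) ^ i) →
      ∀ z ∈ Omega F, ∀ c ∈ S,
        Polynomial.eval c (∑ i ∈ Finset.range (ℓ1 + 1), Polynomial.C (F1 i z) *
            (Polynomial.X ^ i * (Polynomial.X * Polynomial.C z + 1) ^ (ℓ1 - i))) =
          (c * z + 1) ^ ((ℓ1 : ℤ) - k1) * f (z / (c * z + 1)) := by
    intro ℓ1 k1 F1 hyp z hz c hc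
    have hu : c * z + 1 ≠ 0 := hune z hz c hc
    have h2 : (c * z + 1) ^ ((ℓ1 : ℤ) - k1) * f (z / (c * z + 1)) =
        (c * z + 1) ^ (ℓ1 : ℕ) * ((c * z + 1) ^ (-k1) * f (z / (c * z + 1))) := by
      rw [sub_eq_add_neg, zpow_add₀ hu, zpow_natCast, mul_assoc]
    rw [h2, hyp z hz c hc, Finset.mul_sum, Polynomial.eval_finset_sum]
    apply Finset.sum_congr rfl
    intro i hi
    have hi' : i ≤ ℓ1 := Nat.lt_succ_iff.mp (Finset.mem_range.mp hi)
    simp only [Polynomial.eval_mul, Polynomial.eval_add, Polynomial.eval_pow,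
      Polynomial.eval_C, Polynomial.eval_X, Polynomial.eval_one]
    rw [div_pow, show (c * z + 1) ^ (ℓ1 : ℕ) = (c * z + 1) ^ (ℓ1 - i) * (c * z + 1) ^ i from by
      rw [← pow_add, Nat.sub_add_cancel hi']]
    field_simp
  -- the comparison of the two associated polynomials
  have hpoly : ∀ (ℓ1 : ℕ) (k1 : ℤ) (F1 : ℕ → L → L) (ℓ2 : ℕ) (k2 : ℤ) (F2 : ℕ → L → L),
      (∀ z ∈ Omega F, ∀ c ∈ S, (c * z + 1) ^ (-k1) * f (z / (c * z + 1)) =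
        ∑ i ∈ Finset.range (ℓ1 + 1), F1 i z * (c / (c * z + 1)) ^ i) →
      (∀ z ∈ Omega F, ∀ c ∈ S, (c * z + 1) ^ (-k2) * f (z / (c * z + 1)) =
        ∑ i ∈ Finset.range (ℓ2 + 1), F2 i z * (c / (c * z + 1)) ^ i) →
      ((ℓ2 : ℤ) - k2 ≤ (ℓ1 : ℤ) - k1) →
      ∀ z ∈ Omega F,
        (∑ i ∈ Finset.range (ℓ1 + 1), Polynomial.C (F1 i z) *
            (Polynomial.X ^ i * (Polynomial.X * Polynomial.C z + 1) ^ (ℓ1 - i))) =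
          (Polynomial.X * Polynomial.C z + 1) ^ (((ℓ1 : ℤ) - k1 - ((ℓ2 : ℤ) - k2)).toNat) *
          (∑ i ∈ Finset.range (ℓ2 + 1), Polynomial.C (F2 i z) *
            (Polynomial.X ^ i * (Polynomial.X * Polynomial.C z + 1) ^ (ℓ2 - i))) := by
    intro ℓ1 k1 F1 ℓ2 k2 F2 hyp1 hyp2 hle z hz
    apply poly_eq_of_eval_eq hSinf
    intro c hc
    have hu : c * z + 1 ≠ 0 := hune z hz c hc
    rw [heval ℓ1 k1 F1 hyp1 z hz c hc, Polynomial.eval_mul, Polynomial.eval_pow,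
      heval ℓ2 k2 F2 hyp2 z hz c hc]
    simp only [Polynomial.eval_add, Polynomial.eval_mul, Polynomial.eval_X, Polynomial.eval_C,
      Polynomial.eval_one]
    rw [← zpow_natCast (c * z + 1) (((ℓ1 : ℤ) - k1 - ((ℓ2 : ℤ) - k2)).toNat),
      Int.toNat_of_nonneg (by omega), ← mul_assoc, ← zpow_add₀ hu]
    congr 2
    omega
  -- if one "normalized weight" is bigger, the top coefficient vanishes
  have hvanish : ∀ (ℓ1 : ℕ) (k1 : ℤ) (F1 : ℕ → L → L) (ℓ2 : ℕ) (k2 : ℤ) (F2 : ℕ → L → L),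
      (∀ z ∈ Omega F, ∀ c ∈ S, (c * z + 1) ^ (-k1) * f (z / (c * z + 1)) =
        ∑ i ∈ Finset.range (ℓ1 + 1), F1 i z * (c / (c * z + 1)) ^ i) →
      (∀ z ∈ Omega F, ∀ c ∈ S, (c * z + 1) ^ (-k2) * f (z / (c * z + 1)) =
        ∑ i ∈ Finset.range (ℓ2 + 1), F2 i z * (c / (c * z + 1)) ^ i) →
      ((ℓ2 : ℤ) - k2 < (ℓ1 : ℤ) - k1) → ∀ z ∈ Omega F, F1 ℓ1 z = 0 := by
    intro ℓ1 k1 F1 ℓ2 k2 F2 hyp1 hyp2 hlt z hz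
    have hz0 := omega_ne_zero F hz
    have hp := hpoly ℓ1 k1 F1 ℓ2 k2 F2 hyp1 hyp2 (le_of_lt hlt) z hz
    have hev := congrArg (Polynomial.eval (-z⁻¹)) hp
    rw [eval_top ℓ1 (fun i => F1 i z) hz0] at hev
    have h0 : Polynomial.eval (-z⁻¹) (Polynomial.X * Polynomial.C z + 1) = 0 := by
      simp only [Polynomial.eval_add, Polynomial.eval_mul, Polynomial.eval_X, Polynomial.eval_C,
        Polynomial.eval_one]
      rw [neg_mul, inv_mul_cancel₀ hz0]
      ring
    rw [Polynomial.eval_mul, Polynomial.eval_pow, h0,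
      zero_pow (by omega : (((ℓ1 : ℤ) - k1 - ((ℓ2 : ℤ) - k2)).toNat ≠ 0)), zero_mul] at hev
    have hzi : (-z⁻¹ : L) ≠ 0 := neg_ne_zero.mpr (inv_ne_zero hz0)
    rcases mul_eq_zero.mp hev with h | h
    · exact h
    · exact absurd h (pow_ne_zero _ hzi)
  have hkf := hkey k m ℓ fam hQM
  have hkg := hkey k' m' ℓ' gam hQM'
  -- equality of normalized weights
  have he : (ℓ : ℤ) - k = (ℓ' : ℤ) - k' := by
    by_contra hne
    rcases lt_or_gt_of_ne hne with h | h
    · obtain ⟨z0, hz0, hgz⟩ := hgl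
      exact hgz (hvanish ℓ' k' gam ℓ k fam hkg hkf h z0 hz0)
    · obtain ⟨z0, hz0, hfz⟩ := hfl
      exact hfz (hvanish ℓ k fam ℓ' k' gam hkf hkg h z0 hz0)
  -- equality of the two associated polynomials
  have hPQ : ∀ z ∈ Omega F, (∑ i ∈ Finset.range (ℓ + 1), Polynomial.C (fam i z) *
        (Polynomial.X ^ i * (Polynomial.X * Polynomial.C z + 1) ^ (ℓ - i))) =
      (∑ i ∈ Finset.range (ℓ' + 1), Polynomial.C (gam i z) *
        (Polynomial.X ^ i * (Polynomial.X * Polynomial.C z + 1) ^ (ℓ' - i))) := by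
    intro z hz
    have hp := hpoly ℓ k fam ℓ' k' gam hkf hkg (le_of_eq he.symm) z hz
    rwa [show (((ℓ : ℤ) - k - ((ℓ' : ℤ) - k')).toNat = 0) from by omega, pow_zero, one_mul] at hp
  -- relation between the two top coefficients
  have hstar : ∀ z ∈ Omega F, fam ℓ z * (-z⁻¹) ^ ℓ = gam ℓ' z * (-z⁻¹) ^ ℓ' := by
    intro z hz
    have hz0 := omega_ne_zero F hz
    have hev := congrArg (Polynomial.eval (-z⁻¹)) (hPQ z hz)
    rwa [eval_top ℓ (fun i => fam i z) hz0, eval_top ℓ' (fun i => gam i z) hz0] at hev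
  -- equality of depths
  have hll : ℓ = ℓ' := by
    by_contra hne
    rcases Nat.lt_or_ge ℓ ℓ' with hlt | hge
    · obtain ⟨I, hI, hIper⟩ := hper ℓ le_rfl
      obtain ⟨I', hI', hIper'⟩ := hper' ℓ' le_rfl
      obtain ⟨z0, hz0, hf0⟩ := hfl
      refine periodic_contra F ι hι (ℓ' - ℓ) (by omega) (gam ℓ') (fam ℓ) I' I hI' hI hIper'
        hIper ?_ z0 hz0 hf0
      intro z hz
      have h1 := hstar z hz
      have hz0' := omega_ne_zero F hz
      have hw : (-z⁻¹ : L) * (-z) = 1 := by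
        rw [neg_mul_neg, inv_mul_cancel₀ hz0']
      have h2 : (-z : L) ^ ℓ' = (-z) ^ (ℓ' - ℓ) * (-z) ^ ℓ := by
        rw [← pow_add]
        congr 1
        omega
      calc gam ℓ' z = gam ℓ' z * ((-z⁻¹) ^ ℓ' * (-z) ^ ℓ') := by
            rw [← mul_pow, hw, one_pow, mul_one]
        _ = fam ℓ z * (-z⁻¹) ^ ℓ * (-z) ^ ℓ' := by rw [← mul_assoc, ← h1]
        _ = fam ℓ z * (-z) ^ (ℓ' - ℓ) * ((-z⁻¹) ^ ℓ * (-z) ^ ℓ) := by rw [h2]; ring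
        _ = fam ℓ z * (-z) ^ (ℓ' - ℓ) := by rw [← mul_pow, hw, one_pow, mul_one]
    · obtain ⟨I, hI, hIper⟩ := hper ℓ le_rfl
      obtain ⟨I', hI', hIper'⟩ := hper' ℓ' le_rfl
      obtain ⟨z0, hz0, hg0⟩ := hgl
      refine periodic_contra F ι hι (ℓ - ℓ') (by omega) (fam ℓ) (gam ℓ') I I' hI hI' hIper
        hIper' ?_ z0 hz0 hg0
      intro z hz
      have h1 := (hstar z hz).symm
      have hz0' := omega_ne_zero F hz
      have hw : (-z⁻¹ : L) * (-z) = 1 := by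
        rw [neg_mul_neg, inv_mul_cancel₀ hz0']
      have h2 : (-z : L) ^ ℓ = (-z) ^ (ℓ - ℓ') * (-z) ^ ℓ' := by
        rw [← pow_add]
        congr 1
        omega
      calc fam ℓ z = fam ℓ z * ((-z⁻¹) ^ ℓ * (-z) ^ ℓ) := by
            rw [← mul_pow, hw, one_pow, mul_one]
        _ = gam ℓ' z * (-z⁻¹) ^ ℓ' * (-z) ^ ℓ := by rw [← mul_assoc, ← h1]
        _ = gam ℓ' z * (-z) ^ (ℓ - ℓ') * ((-z⁻¹) ^ ℓ' * (-z) ^ ℓ') := by rw [h2]; ring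
        _ = gam ℓ' z * (-z) ^ (ℓ - ℓ') := by rw [← mul_pow, hw, one_pow, mul_one]
  subst hll
  have hk : k = k' := by omega
  subst hk
  -- equality of all coefficient functions on Ω
  have hfg : ∀ i ≤ ℓ, Set.EqOn (fam i) (gam i) (Omega F) := by
    intro i hi z hz
    have hinj : Set.InjOn (fun c => c / (c * z + 1)) S := by
      intro c1 hc1 c2 hc2 hcc
      have h1 := hune z hz c1 hc1
      have h2 := hune z hz c2 hc2
      rw [div_eq_div_iff h1 h2] at hcc
      linear_combination hcc
    have hTinf : ((fun c => c / (c * z + 1)) '' S).Infinite := hSinf.image hinj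
    have hzero : (∑ j ∈ Finset.range (ℓ + 1),
        Polynomial.C (fam j z - gam j z) * Polynomial.X ^ j) = 0 := by
      apply Polynomial.eq_zero_of_infinite_isRoot
      apply hTinf.mono
      rintro t ⟨c, hc, rfl⟩
      have h1 := hkf z hz c hc
      have h2 := hkg z hz c hc
      have h3 := h1.symm.trans h2
      simp only [Set.mem_setOf_eq, Polynomial.IsRoot, Polynomial.eval_finset_sum,
        Polynomial.eval_mul, Polynomial.eval_C, Polynomial.eval_pow, Polynomial.eval_X,
        sub_mul]
      rw [Finset.sum_sub_distrib, h3, sub_self]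
    have hco := congrArg (fun p => Polynomial.coeff p i) hzero
    simp only [Polynomial.finset_sum_coeff, Polynomial.coeff_C_mul_X_pow,
      Polynomial.coeff_zero, Finset.sum_ite_eq, Finset.mem_range,
      Nat.lt_succ_iff, hi, if_true] at hco
    exact sub_eq_zero.mp hco
  -- every determinant of Γ satisfies x ^ (m - m') = 1
  have hdet1 : ∀ γ ∈ Γ, detL F γ ^ (m - m') = 1 := by
    intro γ hγ
    obtain ⟨z0, hz0, hfz0⟩ := hf
    have hzΩ : act F γ⁻¹ z0 ∈ Omega F := act_mem F γ⁻¹ hz0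
    have h1 := hQM.2 γ hγ _ hzΩ
    have h2 := hQM'.2 γ hγ _ hzΩ
    simp only [slash] at h1 h2
    rw [act_inv_cancel F γ hz0] at h1 h2
    have hR : (∑ i ∈ Finset.range (ℓ + 1), fam i (act F γ⁻¹ z0) *
          (Mc F γ 1 0 / jf F γ (act F γ⁻¹ z0)) ^ i) =
        ∑ i ∈ Finset.range (ℓ + 1), gam i (act F γ⁻¹ z0) *
          (Mc F γ 1 0 / jf F γ (act F γ⁻¹ z0)) ^ i := by
      refine Finset.sum_congr rfl fun i hi => ?_
      rw [hfg i (Nat.lt_succ_iff.mp (Finset.mem_range.mp hi)) hzΩ]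
    have h3 := h1.trans (hR.trans h2.symm)
    have hj := jf_ne_zero F γ hzΩ
    have hd := detL_ne_zero F γ
    have h4 : detL F γ ^ m = detL F γ ^ m' := by
      have hne : jf F γ (act F γ⁻¹ z0) ^ (-k) * f z0 ≠ 0 :=
        mul_ne_zero (zpow_ne_zero _ hj) hfz0
      apply mul_right_cancel₀ hne
      rw [← mul_assoc, ← mul_assoc]
      exact h3
    rw [zpow_sub₀ hd, h4, div_self (zpow_ne_zero _ hd)]
  -- every determinant of Γ satisfies x ^ (q - 1) = 1
  have hNpos : 0 < Fintype.card Fq - 1 := by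
    have := Fintype.one_lt_card (α := Fq)
    omega
  have hdetN : ∀ γ ∈ Γ, detL F γ ^ (Fintype.card Fq - 1) = 1 := by
    intro γ hγ
    obtain ⟨M, hM, hMd, -⟩ := hΓA γ hγ
    have hdetLM : detL F γ = ((ι M.det : F) : L) := by
      rw [detL_eq, ← hM 0 0, ← hM 0 1, ← hM 1 0, ← hM 1 1, Matrix.det_fin_two,
        map_sub, map_mul, map_mul]
      simp only [iL]
      push_cast
      ring
    obtain ⟨r, hru, hrC⟩ := Polynomial.isUnit_iff.mp hMd
    obtain ⟨v, rfl⟩ := hru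
    have hv : (v : Fq) ^ (Fintype.card Fq - 1) = 1 :=
      FiniteField.pow_card_sub_one_eq_one _ (Units.ne_zero v)
    rw [hdetLM, ← hrC, ← SubmonoidClass.coe_pow, ← map_pow, ← Polynomial.C_pow, hv]
    simp
  -- the group-theoretic conclusion
  set φ : GL (Fin 2) F →* Lˣ :=
    (Units.map (F.subtype.toMonoidHom)).comp (Matrix.GeneralLinearGroup.det) with hφdef
  have hφval : ∀ γ : GL (Fin 2) F, ((φ γ : Lˣ) : L) = detL F γ := fun γ => rfl
  set H : Subgroup Lˣ := Subgroup.map φ Γ with hHdef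
  have hroots : Set.Finite {x : L | x ^ (Fintype.card Fq - 1) = 1} := by
    have hsub : {x : L | x ^ (Fintype.card Fq - 1) = 1} ⊆
        {x : L | (Polynomial.X ^ (Fintype.card Fq - 1) - Polynomial.C 1 :
          Polynomial L).IsRoot x} := by
      intro x hx
      rw [Set.mem_setOf_eq] at hx
      simp only [Set.mem_setOf_eq, Polynomial.IsRoot, Polynomial.eval_sub, Polynomial.eval_pow,
        Polynomial.eval_X, Polynomial.eval_C, hx, sub_self]
    refine Set.Finite.subset (Polynomial.finite_setOf_isRoot ?_) hsub
    intro hcon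
    have hc := congrArg (fun p => Polynomial.coeff p (Fintype.card Fq - 1)) hcon
    simp only [Polynomial.coeff_sub, Polynomial.coeff_X_pow, if_pos rfl, Polynomial.coeff_C,
      if_neg hNpos.ne', Polynomial.coeff_zero, sub_zero] at hc
    exact one_ne_zero hc
  have hHfin : ((H : Set Lˣ)).Finite := by
    apply Set.Finite.of_finite_image (f := Units.val) ?_ (Set.injOn_of_injective Units.val_injective)
    apply hroots.subset
    rintro x ⟨u, hu, rfl⟩
    obtain ⟨γ, hγ, rfl⟩ := Subgroup.mem_map.mp hu
    rw [Set.mem_setOf_eq, hφval γ]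
    exact hdetN γ hγ
  haveI : Finite (H : Set Lˣ) := hHfin.to_subtype
  haveI : Finite H := hHfin.to_subtype
  obtain ⟨g, hg⟩ := IsCyclic.exists_generator (α := H)
  have horder : orderOf g = Nat.card H := orderOf_eq_card_of_forall_mem_zpowers hg
  have hgz : g ^ (m - m') = (1 : H) := by
    obtain ⟨γ, hγ, hγg⟩ := Subgroup.mem_map.mp g.2
    have hval : ((g : Lˣ) : L) ^ (m - m') = 1 := by
      rw [← hγg, hφval γ]
      exact hdet1 γ hγ
    have h2 : ((g ^ (m - m') : H) : Lˣ) = 1 := by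
      apply Units.ext
      rw [SubgroupClass.coe_zpow, Units.val_zpow_eq_zpow_val]
      exact hval
    exact Subtype.ext h2
  have hdvd : (orderOf g : ℤ) ∣ (m - m') := orderOf_dvd_iff_zpow_eq_one.mpr hgz
  have himg : detL F '' (Γ : Set (GL (Fin 2) F)) = Units.val '' (H : Set Lˣ) := by
    rw [hHdef, Subgroup.coe_map, Set.image_image]
    rfl
  have hcard : Set.ncard (detL F '' (Γ : Set (GL (Fin 2) F))) = Nat.card H := by
    rw [himg, Set.ncard_image_of_injective _ Units.val_injective, ← Nat.card_coe_set_eq]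
    rfl
  refine ⟨rfl, rfl, hfg, ?_⟩
  rw [hcard, ← horder]
  exact hdvd


end DrinfeldQM
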